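/- For every integer k ≥ 3 and every finite simple graph G, the chromatic number of G is at most k if and only if the signed graph S(G) admits a homomorphism to (K_{2k},M). -/

import Mathlib

open SimpleGraph

/-- The sign of a walk in a signed graph `(G, σ)`: the product of the signs of its edges,
counted with multiplicity. -/
def walkSign {V : Type*} {G : SimpleGraph V} (σ : Sym2 V → ℤˣ) {u v : V}
    (w : G.Walk u v) : ℤˣ :=
  (w.edges.map σ).prod

/-- A homomorphism of signed graphs: a graph homomorphism which preserves the signs of
closed walks. -/
def IsSignedHom {U V : Type*} (G : SimpleGraph U) (σ : Sym2 U → ℤˣ)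
    (H : SimpleGraph V) (π : Sym2 V → ℤˣ) (f : G →g H) : Prop :=
  ∀ (u : U) (w : G.Walk u u), walkSign π (w.map f) = walkSign σ w

/-- `(G, σ)` admits a homomorphism to `(H, π)`. -/
def SignedHom {U V : Type*} (G : SimpleGraph U) (σ : Sym2 U → ℤˣ)
    (H : SimpleGraph V) (π : Sym2 V → ℤˣ) : Prop :=
  ∃ f : G →g H, IsSignedHom G σ H π f

/-- The signature on the complete graph `K_n` (with `n` even, vertices `0, …, n-1`) whose
negative edges form the perfect matching `{01, 23, 45, …}`: the edge `uv` is negative iff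
`u` and `v` lie in the same matched pair, i.e. `⌊u/2⌋ = ⌊v/2⌋`. -/
def matchSign (n : ℕ) : Sym2 (Fin n) → ℤˣ :=
  Sym2.lift ⟨fun a b => if (a : ℕ) / 2 = (b : ℕ) / 2 then -1 else 1, by
    intro a b
    simp only [eq_comm]⟩

/-- The underlying graph of `S(G)`: keep the vertices of `G`; for each edge `e = uv` of `G` add
two new vertices `x_e = (e, false)` and `y_e = (e, true)`, each joined to `u` and to `v`; the
edge `uv` itself is not present. -/
def SGraph {V : Type*} (G : SimpleGraph V) : SimpleGraph (V ⊕ (G.edgeSet × Bool)) where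
  Adj a b :=
    (∃ (u : V) (p : G.edgeSet × Bool), a = Sum.inl u ∧ b = Sum.inr p ∧ u ∈ (p.1 : Sym2 V)) ∨
    (∃ (u : V) (p : G.edgeSet × Bool), b = Sum.inl u ∧ a = Sum.inr p ∧ u ∈ (p.1 : Sym2 V))
  symm := ⟨fun _ _ h => Or.symm h⟩
  loopless := ⟨by
    rintro a (⟨u, p, h₁, h₂, -⟩ | ⟨u, p, h₁, h₂, -⟩) <;> rw [h₁] at h₂ <;> exact absurd h₂ (by simp)⟩

/-- A signature on `S(G)` is admissible if in each of the 4-cycles `u x_e v y_e`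
(where `e = uv` is an edge of `G`) exactly one of the four edges is negative. -/
def SGraphSignature {V : Type*} (G : SimpleGraph V) (σS : Sym2 (V ⊕ (G.edgeSet × Bool)) → ℤˣ) :
    Prop :=
  ∀ (e : G.edgeSet) (u v : V), (e : Sym2 V) = s(u, v) →
    ([σS s(Sum.inl u, Sum.inr (e, false)), σS s(Sum.inl v, Sum.inr (e, false)),
      σS s(Sum.inl u, Sum.inr (e, true)), σS s(Sum.inl v, Sum.inr (e, true))].count (-1) = 1)

/-- For `k ≥ 3` and a finite simple graph `G`, `χ(G) ≤ k` iff the signed graph `S(G)` admits a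
homomorphism to `(K_{2k}, M)`. -/
lemma exists_pair' {V : Type*} (G : SimpleGraph V) (e : G.edgeSet) :
    ∃ p : V × V, (e : Sym2 V) = s(p.1, p.2) ∧ G.Adj p.1 p.2 := by
  obtain ⟨z, hz⟩ := e
  induction z using Sym2.inductionOn with
  | hf u v => exact ⟨(u, v), rfl, hz⟩

lemma exists_third {k : ℕ} (hk : 3 ≤ k) (i j : Fin k) : ∃ l : Fin k, l ≠ i ∧ l ≠ j := by
  by_contra h
  push_neg at h
  have hsub : (Finset.univ : Finset (Fin k)) ⊆ {i, j} := by
    intro l _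
    by_cases hl : l = i
    · simp [hl]
    · simp [h l hl]
  have h2 : ({i, j} : Finset (Fin k)).card ≤ 2 := by
    apply (Finset.card_insert_le _ _).trans; simp
  have h3 := (Finset.card_le_card hsub).trans h2
  simp [Finset.card_univ] at h3
  omega

lemma prodcount (l : List ℤˣ) : l.prod = (-1) ^ (l.count (-1)) := by
  induction l with
  | nil => simp
  | cons a t ih =>
    rcases Int.units_eq_one_or a with h | h <;>
      simp [h, List.count_cons, ih, pow_succ, mul_comm]

lemma walkSign_map {U W : Type*} {G : SimpleGraph U} {H : SimpleGraph W}
    (σ : Sym2 U → ℤˣ) (π : Sym2 W → ℤˣ) (f : G →g H) (ζ : U → ℤˣ)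
    (h : ∀ a b, G.Adj a b → π s(f a, f b) = ζ a * ζ b * σ s(a, b)) :
    ∀ {x y : U} (w : G.Walk x y), walkSign π (w.map f) = ζ x * ζ y * walkSign σ w := by
  intro x y w
  induction w with
  | nil => simp [walkSign, Int.units_mul_self]
  | @cons a b c hab p ih =>
    simp only [Walk.map_cons, walkSign, Walk.edges_cons, List.map_cons, List.prod_cons]
    rw [show ((p.map f).edges.map π).prod = walkSign π (p.map f) from rfl, ih,
      h a b hab]
    have hb : ζ b * ζ b = 1 := Int.units_mul_self _
    calc ζ a * ζ b * σ s(a, b) * (ζ b * ζ c * walkSign σ p)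
        = (ζ b * ζ b) * (ζ a * ζ c * (σ s(a, b) * walkSign σ p)) := by ac_rfl
      _ = ζ a * ζ c * (σ s(a, b) * walkSign σ p) := by rw [hb, one_mul]

lemma key {V : Type*} {G : SimpleGraph V} {k : ℕ} (hk : 3 ≤ k)
    (σS : Sym2 (V ⊕ (G.edgeSet × Bool)) → ℤˣ) (C : G.Coloring (Fin k))
    (p : G.edgeSet × Bool) :
    ∃ (t : Fin (2 * k)) (z : ℤˣ), ∀ u : V, u ∈ (p.1 : Sym2 V) →
      (2 * (C u : ℕ) ≠ (t : ℕ)) ∧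
      matchSign (2 * k) s(⟨2 * (C u : ℕ), by have := (C u).isLt; omega⟩, t)
        = z * σS s(Sum.inl u, Sum.inr p) := by
  obtain ⟨⟨u, v⟩, he, huv⟩ := exists_pair' G p.1
  have hij : C u ≠ C v := C.valid huv
  have hmem : ∀ w : V, w ∈ (p.1 : Sym2 V) → w = u ∨ w = v := by
    intro w hw; rw [he] at hw; exact Sym2.mem_iff.mp hw
  set s1 := σS s(Sum.inl u, Sum.inr p) with hs1
  set s2 := σS s(Sum.inl v, Sum.inr p) with hs2
  by_cases hs : s1 = s2
  · obtain ⟨l, hl1, hl2⟩ := exists_third hk (C u) (C v)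
    refine ⟨⟨2 * l, by have := l.isLt; omega⟩, s1, ?_⟩
    intro w hw
    have hne : (C w : ℕ) ≠ (l : ℕ) := by
      rcases hmem w hw with rfl | rfl
      · exact fun hh => hl1 (Fin.val_injective hh.symm)
      · exact fun hh => hl2 (Fin.val_injective hh.symm)
    constructor
    · show 2 * (C w : ℕ) ≠ 2 * (l : ℕ)
      omega
    · have hm : matchSign (2 * k)
          s((⟨2 * (C w : ℕ), by have := (C w).isLt; omega⟩ : Fin (2 * k)),
            ⟨2 * l, by have := l.isLt; omega⟩) = 1 := by
        simp only [matchSign, Sym2.lift_mk]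
        rw [if_neg]
        omega
      rw [hm]
      rcases hmem w hw with rfl | rfl
      · exact (Int.units_mul_self s1).symm
      · rw [← hs2, ← hs]; exact (Int.units_mul_self s1).symm
  · have hs2' : s2 = -s1 := by
      rcases Int.units_eq_one_or s1 with h | h <;>
        rcases Int.units_eq_one_or s2 with h' | h' <;>
        simp [h, h'] at hs ⊢
    refine ⟨⟨2 * (C u : ℕ) + 1, by have := (C u).isLt; omega⟩, -s1, ?_⟩
    intro w hw
    rcases hmem w hw with rfl | rfl
    · refine ⟨by show 2*(C w:ℕ) ≠ 2*(C w:ℕ)+1; omega, ?_⟩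
      have hm : matchSign (2 * k)
          s((⟨2 * (C w : ℕ), by have := (C w).isLt; omega⟩ : Fin (2 * k)),
            ⟨2 * (C w : ℕ) + 1, by have := (C w).isLt; omega⟩) = -1 := by
        simp only [matchSign, Sym2.lift_mk]
        rw [if_pos]
        omega
      rw [hm, ← hs1, neg_mul, Int.units_mul_self]
    · refine ⟨by show 2*(C w:ℕ) ≠ 2*(C u:ℕ)+1; omega, ?_⟩
      have hcc : (C w : ℕ) ≠ (C u : ℕ) := by
        intro hh; exact hij (Fin.val_injective hh.symm)
      have hm : matchSign (2 * k)
          s((⟨2 * (C w : ℕ), by have := (C w).isLt; omega⟩ : Fin (2 * k)),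
            ⟨2 * (C u : ℕ) + 1, by have := (C u).isLt; omega⟩) = 1 := by
        simp only [matchSign, Sym2.lift_mk]
        rw [if_neg]
        omega
      rw [hm, ← hs2, hs2', neg_mul_neg, Int.units_mul_self]

theorem chromaticNumber_le_iff_SGraph_signedHom {V : Type*} [Fintype V]
    (G : SimpleGraph V) (k : ℕ) (hk : 3 ≤ k)
    (σS : Sym2 (V ⊕ (G.edgeSet × Bool)) → ℤˣ) (hσS : SGraphSignature G σS) :
    G.chromaticNumber ≤ (k : ℕ∞) ↔
      SignedHom (SGraph G) σS (⊤ : SimpleGraph (Fin (2 * k))) (matchSign (2 * k)) := by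
  constructor
  · intro hχ
    obtain ⟨C⟩ := chromaticNumber_le_iff_colorable.mp hχ
    choose t z hkey using fun p => key hk σS C p
    let F : V ⊕ (G.edgeSet × Bool) → Fin (2 * k) :=
      Sum.elim (fun u => ⟨2 * (C u : ℕ), by have := (C u).isLt; omega⟩) t
    have hF : ∀ a b, (SGraph G).Adj a b → F a ≠ F b := by
      rintro a b (⟨u, p, rfl, rfl, hm⟩ | ⟨u, p, rfl, rfl, hm⟩)
      · intro hFab
        exact (hkey p u hm).1 (congrArg Fin.val hFab)
      · intro hFab
        exact (hkey p u hm).1 (congrArg Fin.val hFab.symm)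
    refine ⟨⟨F, fun {a b} hab => (top_adj _ _).mpr (hF a b hab)⟩, ?_⟩
    set ζ : V ⊕ (G.edgeSet × Bool) → ℤˣ := Sum.elim (fun _ => 1) z with hζ
    have hedge : ∀ a b, (SGraph G).Adj a b →
        matchSign (2 * k) s(F a, F b) = ζ a * ζ b * σS s(a, b) := by
      rintro a b (⟨u, p, rfl, rfl, hm⟩ | ⟨u, p, rfl, rfl, hm⟩)
      · show matchSign (2 * k) s(_, t p) = 1 * z p * σS s(Sum.inl u, Sum.inr p)
        rw [one_mul]
        exact (hkey p u hm).2
      · show matchSign (2 * k) s(t p, _) = z p * 1 * σS s(Sum.inr p, Sum.inl u)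
        rw [mul_one, show s(Sum.inr p, Sum.inl u) = s(Sum.inl u, Sum.inr p) from
          Sym2.eq_swap, show (s(t p, F (Sum.inl u)) : Sym2 (Fin (2*k))) =
          s(F (Sum.inl u), t p) from Sym2.eq_swap]
        exact (hkey p u hm).2
    intro a w
    rw [walkSign_map σS (matchSign (2 * k)) _ ζ hedge w, Int.units_mul_self, one_mul]
  · rintro ⟨f, hf⟩
    rw [chromaticNumber_le_iff_colorable]
    refine ⟨Coloring.mk
      (fun u => ⟨(f (Sum.inl u) : ℕ) / 2, by have := (f (Sum.inl u)).isLt; omega⟩) ?_⟩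
    intro u v huv hcc
    have hdiv : ((f (Sum.inl u)) : ℕ) / 2 = ((f (Sum.inl v)) : ℕ) / 2 :=
      congrArg Fin.val hcc
    set e : G.edgeSet := ⟨s(u, v), G.mem_edgeSet.mpr huv⟩ with he
    have hmu : u ∈ (e : Sym2 V) := by rw [he]; simp
    have hmv : v ∈ (e : Sym2 V) := by rw [he]; simp
    have h1 : (SGraph G).Adj (Sum.inl u) (Sum.inr (e, false)) :=
      Or.inl ⟨u, (e, false), rfl, rfl, hmu⟩
    have h2 : (SGraph G).Adj (Sum.inr (e, false)) (Sum.inl v) :=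
      Or.inr ⟨v, (e, false), rfl, rfl, hmv⟩
    have h3 : (SGraph G).Adj (Sum.inl v) (Sum.inr (e, true)) :=
      Or.inl ⟨v, (e, true), rfl, rfl, hmv⟩
    have h4 : (SGraph G).Adj (Sum.inr (e, true)) (Sum.inl u) :=
      Or.inr ⟨u, (e, true), rfl, rfl, hmu⟩
    set w : (SGraph G).Walk (Sum.inl u) (Sum.inl u) :=
      .cons h1 (.cons h2 (.cons h3 (.cons h4 .nil))) with hw
    have hsig := hf (Sum.inl u) w
    have hR : walkSign σS w = -1 := by
      have hc := hσS e u v rfl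
      have hp := prodcount [σS s(Sum.inl u, Sum.inr (e, false)),
        σS s(Sum.inl v, Sum.inr (e, false)), σS s(Sum.inl u, Sum.inr (e, true)),
        σS s(Sum.inl v, Sum.inr (e, true))]
      rw [hc, pow_one] at hp
      simp only [List.prod_cons, List.prod_nil] at hp
      simp only [hw, walkSign, Walk.edges_cons, Walk.edges_nil, List.map_cons,
        List.map_nil, List.prod_cons, List.prod_nil,
        show s(Sum.inr ((e : G.edgeSet), false), Sum.inl v) =
          s(Sum.inl v, Sum.inr (e, false)) from Sym2.eq_swap,
        show s(Sum.inr ((e : G.edgeSet), true), Sum.inl u) =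
          s(Sum.inl u, Sum.inr (e, true)) from Sym2.eq_swap]
      rw [← hp]
      ac_rfl
    have hL : walkSign (matchSign (2 * k)) (w.map f) = 1 := by
      simp only [hw, Walk.map_cons, Walk.map_nil, walkSign, Walk.edges_cons,
        Walk.edges_nil, List.map_cons, List.map_nil, List.prod_cons, List.prod_nil]
      have e1 : matchSign (2 * k) s(f (Sum.inl u), f (Sum.inr (e, false))) =
          matchSign (2 * k) s(f (Sum.inr (e, false)), f (Sum.inl v)) := by
        rw [show s(f (Sum.inr ((e : G.edgeSet), false)), f (Sum.inl v)) =
          s(f (Sum.inl v), f (Sum.inr (e, false))) from Sym2.eq_swap]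
        simp only [matchSign, Sym2.lift_mk]
        rw [hdiv]
      have e2 : matchSign (2 * k) s(f (Sum.inl v), f (Sum.inr (e, true))) =
          matchSign (2 * k) s(f (Sum.inr (e, true)), f (Sum.inl u)) := by
        rw [show s(f (Sum.inr ((e : G.edgeSet), true)), f (Sum.inl u)) =
          s(f (Sum.inl u), f (Sum.inr (e, true))) from Sym2.eq_swap]
        simp only [matchSign, Sym2.lift_mk]
        rw [hdiv]
      rw [← e1, ← e2]
      rcases Int.units_eq_one_or (matchSign (2 * k)
        s(f (Sum.inl u), f (Sum.inr (e, false)))) with h | h <;>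
        rcases Int.units_eq_one_or (matchSign (2 * k)
          s(f (Sum.inl v), f (Sum.inr (e, true)))) with h' | h' <;>
        simp [h, h']
    rw [hL, hR] at hsig
    exact absurd hsig (by decide)
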